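/- Assume λθ > Nμ and 0 ≤ δ < N/(λθ). The derivative of Δ_cr(δ) = arccos(-(δλ²θ² + N²μ)/(Nλθ(1+δμ))) · sqrt((N² - δ²λ²θ²)/(λ²θ² - N²μ²)) with respect to δ equals 1/(1+δμ) - δλ²θ²Δ_cr(δ)/(N² - δ²λ²θ²). -/

import Mathlib

open Real Set

noncomputable def Dcr (lam mu th : ℝ) (N : ℕ) (d : ℝ) : ℝ :=
  Real.arccos (-(d * lam^2 * th^2 + (N : ℝ)^2 * mu) / ((N : ℝ) * lam * th * (1 + d * mu))) *
    Real.sqrt (((N : ℝ)^2 - d^2 * lam^2 * th^2) / (lam^2 * th^2 - (N : ℝ)^2 * mu^2))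

theorem Dcr_deriv_formula
    (lam mu th : ℝ) (N : ℕ) (hN : 0 < N)
    (hlam : 0 < lam) (hmu : 0 < mu) (hth : 0 < th)
    (hgt : lam * th > N * mu) :
    ∀ d ∈ Set.Ico (0 : ℝ) ((N : ℝ) / (lam * th)),
      deriv (Dcr lam mu th N) d
        = 1 / (1 + d * mu)
          - d * lam^2 * th^2 * Dcr lam mu th N d / ((N : ℝ)^2 - d^2 * lam^2 * th^2) := by
  rintro d ⟨hd0, hdlt⟩
  have hn : (0:ℝ) < (N:ℝ) := by exact_mod_cast hN
  have hL : 0 < lam * th := by positivity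
  have hdL : d * (lam * th) < (N:ℝ) := by
    rw [lt_div_iff₀ hL] at hdlt; linarith
  have hB : 0 < lam^2*th^2 - (N:ℝ)^2*mu^2 := by
    nlinarith [mul_pos (sub_pos.2 hgt) (show (0:ℝ) < lam*th + (N:ℝ)*mu by positivity)]
  have hA : 0 < (N:ℝ)^2 - d^2*lam^2*th^2 := by
    nlinarith [mul_pos (sub_pos.2 hdL) (show (0:ℝ) < (N:ℝ) + d*(lam*th) by positivity)]
  have hden : 0 < 1 + d*mu := by nlinarith
  set p : ℝ → ℝ := fun x => -(x * lam^2 * th^2 + (N : ℝ)^2 * mu) / ((N : ℝ) * lam * th * (1 + x * mu)) with hp_def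
  set q : ℝ → ℝ := fun x => ((N : ℝ)^2 - x^2 * lam^2 * th^2) / (lam^2 * th^2 - (N : ℝ)^2 * mu^2) with hq_def
  have hC : 0 < (N:ℝ) * lam * th * (1 + d * mu) := by positivity
  have hnum : 0 < d * lam^2 * th^2 + (N:ℝ)^2 * mu := by positivity
  have hpd : p d = -(d * lam^2 * th^2 + (N : ℝ)^2 * mu) / ((N : ℝ) * lam * th * (1 + d * mu)) := rfl
  have hp1 : p d ≠ 1 := by
    rw [hpd]
    have : -(d * lam^2 * th^2 + (N : ℝ)^2 * mu) / ((N : ℝ) * lam * th * (1 + d * mu)) < 0 := by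
      apply div_neg_of_neg_of_pos (by linarith) hC
    linarith
  have hpm1 : p d ≠ -1 := by
    rw [hpd]
    intro h
    rw [div_eq_iff (ne_of_gt hC)] at h
    nlinarith [mul_pos (sub_pos.2 hdL) (sub_pos.2 hgt)]
  -- derivative of p
  have hu : HasDerivAt (fun x => -(x * lam^2 * th^2 + (N : ℝ)^2 * mu)) (-(lam^2*th^2)) d := by
    have : HasDerivAt (fun x : ℝ => x * lam^2 * th^2 + (N : ℝ)^2 * mu) (lam^2*th^2) d := by
      simpa [mul_assoc] using ((hasDerivAt_id d).mul_const (lam^2*th^2)).add_const ((N : ℝ)^2 * mu)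
    exact this.neg
  have hv : HasDerivAt (fun x => (N : ℝ) * lam * th * (1 + x * mu)) ((N:ℝ)*lam*th*mu) d := by
    have : HasDerivAt (fun x : ℝ => 1 + x * mu) mu d := by
      simpa using ((hasDerivAt_id d).mul_const mu).const_add (1:ℝ)
    simpa [mul_assoc] using this.const_mul ((N : ℝ) * lam * th)
  have hvne : (N : ℝ) * lam * th * (1 + d * mu) ≠ 0 := ne_of_gt hC
  have hp' : HasDerivAt p (-((lam^2*th^2 - (N:ℝ)^2*mu^2)/((N:ℝ)*lam*th*(1+d*mu)^2))) d := by
    have h : HasDerivAt p _ d := hu.div hv hvne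
    convert h using 1
    field_simp
    ring
  have hq' : HasDerivAt q (-(2*d*lam^2*th^2)/(lam^2*th^2 - (N:ℝ)^2*mu^2)) d := by
    have h1 : HasDerivAt (fun x : ℝ => (N : ℝ)^2 - x^2 * lam^2 * th^2) (-(2*d*lam^2*th^2)) d := by
      have : HasDerivAt (fun x : ℝ => x^2 * lam^2 * th^2) (2*d*lam^2*th^2) d := by
        have := (hasDerivAt_pow 2 d).mul_const (lam^2*th^2)
        simpa [mul_assoc, pow_one] using this
      simpa using this.const_sub ((N:ℝ)^2)
    simpa using h1.div_const (lam^2*th^2 - (N:ℝ)^2*mu^2)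
  have hqd : q d = ((N : ℝ)^2 - d^2 * lam^2 * th^2) / (lam^2 * th^2 - (N : ℝ)^2 * mu^2) := rfl
  have hqd_pos : 0 < q d := by rw [hqd]; positivity
  set s : ℝ := Real.sqrt ((N:ℝ)^2 - d^2*lam^2*th^2) with hs_def
  set t : ℝ := Real.sqrt (lam^2*th^2 - (N:ℝ)^2*mu^2) with ht_def
  have hs : 0 < s := Real.sqrt_pos.2 hA
  have ht : 0 < t := Real.sqrt_pos.2 hB
  have hs2 : s^2 = (N:ℝ)^2 - d^2*lam^2*th^2 := Real.sq_sqrt hA.le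
  have ht2 : t^2 = lam^2*th^2 - (N:ℝ)^2*mu^2 := Real.sq_sqrt hB.le
  have hsqrtq : Real.sqrt (q d) = s / t := by
    rw [hqd, Real.sqrt_div hA.le]
  have h1mp : Real.sqrt (1 - p d ^ 2) = s * t / ((N:ℝ)*lam*th*(1+d*mu)) := by
    have heq : 1 - p d ^ 2 = (s * t / ((N:ℝ)*lam*th*(1+d*mu)))^2 := by
      have hC2 : (((N:ℝ)*lam*th*(1+d*mu)))^2 ≠ 0 := pow_ne_zero 2 (ne_of_gt hC)
      have h2 : (s * t / ((N:ℝ)*lam*th*(1+d*mu)))^2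
          = s^2 * t^2 / ((N:ℝ)*lam*th*(1+d*mu))^2 := by
        rw [div_pow, mul_pow]
      rw [h2, hs2, ht2, hpd, div_pow, eq_div_iff hC2, sub_mul,
        div_mul_cancel₀ _ hC2]
      ring
    rw [heq, Real.sqrt_sq (by positivity)]
  have harc : HasDerivAt (fun x => Real.arccos (p x))
      (-(1 / Real.sqrt (1 - p d ^ 2)) * (-((lam^2*th^2 - (N:ℝ)^2*mu^2)/((N:ℝ)*lam*th*(1+d*mu)^2)))) d :=
    (Real.hasDerivAt_arccos hpm1 hp1).comp d hp'
  have hsq : HasDerivAt (fun x => Real.sqrt (q x))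
      ((-(2*d*lam^2*th^2)/(lam^2*th^2 - (N:ℝ)^2*mu^2)) / (2 * Real.sqrt (q d))) d :=
    hq'.sqrt (ne_of_gt hqd_pos)
  have hmul : HasDerivAt (fun x => Real.arccos (p x) * Real.sqrt (q x)) _ d := harc.mul hsq
  have hDcr : Dcr lam mu th N = fun x => Real.arccos (p x) * Real.sqrt (q x) := rfl
  simp only [hDcr]
  rw [hmul.deriv, h1mp, hsqrtq]
  rw [← hs2, ← ht2]
  set a := Real.arccos (p d) with ha_def
  have hCne : ((N:ℝ)*lam*th*(1+d*mu)) ≠ 0 := ne_of_gt hC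
  have hdenne : (1:ℝ) + d*mu ≠ 0 := ne_of_gt hden
  field_simp
  ring
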